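/- Let G be a connected acyclic simple graph in which every vertex has countably infinite degree (the neighbor set of every vertex is countably infinite). Then for every vertex b and any two vertices a, a' adjacent to b, there exists a graph automorphism f of G with f b = b and f a = a'. -/

import Mathlib

/-! Auxiliary material for `tree_aut_transitive_on_neighbors`. -/

/-- The canonical tree on `List ℕ`: `n :: l` is adjacent to `l`. -/
def TreeAut.T : SimpleGraph (List ℕ) where
  Adj x y := (∃ n, x = n :: y) ∨ (∃ n, y = n :: x)
  symm := by constructor; rintro x y (h | h) <;> [exact Or.inr h; exact Or.inl h]
  loopless := by
    constructor; rintro x (⟨n, h⟩ | ⟨n, h⟩) <;>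
    · have := congrArg List.length h
      simp at this

namespace TreeAut

/-- Apply `π` to the last entry of a list. -/
def lastMap (π : ℕ → ℕ) : List ℕ → List ℕ
  | [] => []
  | [n] => [π n]
  | n :: m :: l => n :: lastMap π (m :: l)

lemma lastMap_inv {f g : ℕ → ℕ} (h : ∀ n, f (g n) = n) :
    ∀ l, lastMap f (lastMap g l) = l
  | [] => rfl
  | [n] => by simp [lastMap, h]
  | n :: m :: l => by
    cases hml : lastMap g (m :: l) with
    | nil => cases l <;> simp [lastMap] at hml
    | cons m' l' =>
      have := lastMap_inv h (m :: l)
      rw [hml] at this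
      simp only [lastMap, hml]
      rw [this]

lemma lastMap_adj (f : ℕ → ℕ) {x y : List ℕ} (h : T.Adj x y) :
    T.Adj (lastMap f x) (lastMap f y) := by
  rcases h with ⟨n, rfl⟩ | ⟨n, rfl⟩
  · cases y with
    | nil => exact Or.inl ⟨f n, rfl⟩
    | cons m t => exact Or.inl ⟨n, rfl⟩
  · cases x with
    | nil => exact Or.inr ⟨f n, rfl⟩
    | cons m t => exact Or.inr ⟨n, rfl⟩

/-- The automorphism of the canonical tree induced by a permutation of the
root's branches. -/
def lastIso (π : Equiv.Perm ℕ) : T ≃g T where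
  toFun := lastMap π
  invFun := lastMap π.symm
  left_inv := lastMap_inv (fun n => π.symm_apply_apply n)
  right_inv := lastMap_inv (fun n => π.apply_symm_apply n)
  map_rel_iff' := by
    intro x y
    show T.Adj (lastMap π x) (lastMap π y) ↔ T.Adj x y
    constructor
    · intro h
      have := lastMap_adj π.symm h
      rwa [lastMap_inv (fun n => π.symm_apply_apply n) x,
        lastMap_inv (fun n => π.symm_apply_apply n) y] at this
    · exact lastMap_adj π

/-- Build vertices of `G` from lists, following chosen child functions. -/
def buildVert {V : Type*} (ch : V → ℕ → V) (b : V) : List ℕ → V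
  | [] => b
  | n :: l => ch (buildVert ch b l) n

end TreeAut

open TreeAut in
/-- In a connected acyclic simple graph all of whose vertices have countably infinite
degree, any two neighbors `a`, `a'` of a vertex `b` are conjugate by an automorphism
fixing `b`. -/
theorem tree_aut_transitive_on_neighbors {V : Type*} (G : SimpleGraph V)
    (hconn : G.Connected) (hacyc : G.IsAcyclic)
    (hdeg : ∀ v : V, Countable (G.neighborSet v) ∧ Infinite (G.neighborSet v))
    (b a a' : V) (ha : G.Adj b a) (ha' : G.Adj b a') :
    ∃ f : G ≃g G, f b = b ∧ f a = a' := by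
  classical
  -- adjacent vertices are at distance 1
  have hd1 : ∀ u v : V, G.Adj u v → G.dist u v = 1 := fun u v h =>
    SimpleGraph.dist_eq_one_iff_adj.mpr h
  -- adjacent vertices have different distances to b
  have hA : ∀ u v : V, G.Adj u v → G.dist b u ≠ G.dist b v := by
    intro u v huv heq
    obtain ⟨p, hp, hpl⟩ := hconn.exists_path_of_dist b v
    by_cases hu : u ∈ p.support
    · have h1 : G.dist b u ≤ (p.takeUntil u hu).length :=
        SimpleGraph.dist_le _
      have h2 : G.dist u v ≤ (p.dropUntil u hu).length :=
        SimpleGraph.dist_le _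
      have h3 : (p.takeUntil u hu).length + (p.dropUntil u hu).length = p.length := by
        have := congrArg SimpleGraph.Walk.length (p.take_spec hu)
        rwa [SimpleGraph.Walk.length_append] at this
      rw [hd1 u v huv] at h2
      omega
    · -- extend p by the edge v-u to get a path b → u of length dist b v + 1
      have hq : (p.concat huv.symm).IsPath := by
        rw [← SimpleGraph.Walk.isPath_reverse_iff, SimpleGraph.Walk.reverse_concat,
          SimpleGraph.Walk.cons_isPath_iff]
        refine ⟨SimpleGraph.Walk.isPath_reverse_iff p |>.mpr hp, ?_⟩
        rwa [SimpleGraph.Walk.support_reverse, List.mem_reverse]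
      obtain ⟨p', hp', hpl'⟩ := hconn.exists_path_of_dist b u
      have := hacyc.path_unique ⟨p.concat huv.symm, hq⟩ ⟨p', hp'⟩
      have hw : p.concat huv.symm = p' := Subtype.ext_iff.mp this
      have hlen := congrArg SimpleGraph.Walk.length hw
      rw [SimpleGraph.Walk.length_concat] at hlen
      omega
  -- adjacent vertices have distances differing by exactly 1
  have hB : ∀ u v : V, G.Adj u v →
      G.dist b u + 1 = G.dist b v ∨ G.dist b v + 1 = G.dist b u := by
    intro u v huv
    have h1 : G.dist b v ≤ G.dist b u + G.dist u v := hconn.dist_triangle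
    have h2 : G.dist b u ≤ G.dist b v + G.dist v u := hconn.dist_triangle
    rw [hd1 u v huv] at h1
    rw [hd1 v u huv.symm] at h2
    have := hA u v huv
    omega
  -- uniqueness of the parent
  have hC : ∀ v u₁ u₂ : V, G.Adj u₁ v → G.Adj u₂ v →
      G.dist b u₁ + 1 = G.dist b v → G.dist b u₂ + 1 = G.dist b v → u₁ = u₂ := by
    intro v u₁ u₂ h1 h2 hd₁ hd₂
    obtain ⟨p₁, hp₁, hl₁⟩ := hconn.exists_path_of_dist b u₁
    obtain ⟨p₂, hp₂, hl₂⟩ := hconn.exists_path_of_dist b u₂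
    have hv₁ : v ∉ p₁.support := by
      intro hv
      have := SimpleGraph.Walk.length_takeUntil_le p₁ hv
      have := SimpleGraph.dist_le (p₁.takeUntil v hv)
      omega
    have hv₂ : v ∉ p₂.support := by
      intro hv
      have := SimpleGraph.Walk.length_takeUntil_le p₂ hv
      have := SimpleGraph.dist_le (p₂.takeUntil v hv)
      omega
    have hq₁ : (p₁.concat h1).IsPath := by
      rw [← SimpleGraph.Walk.isPath_reverse_iff, SimpleGraph.Walk.reverse_concat,
        SimpleGraph.Walk.cons_isPath_iff]
      exact ⟨(SimpleGraph.Walk.isPath_reverse_iff p₁).mpr hp₁, by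
        rwa [SimpleGraph.Walk.support_reverse, List.mem_reverse]⟩
    have hq₂ : (p₂.concat h2).IsPath := by
      rw [← SimpleGraph.Walk.isPath_reverse_iff, SimpleGraph.Walk.reverse_concat,
        SimpleGraph.Walk.cons_isPath_iff]
      exact ⟨(SimpleGraph.Walk.isPath_reverse_iff p₂).mpr hp₂, by
        rwa [SimpleGraph.Walk.support_reverse, List.mem_reverse]⟩
    have heq := hacyc.path_unique ⟨p₁.concat h1, hq₁⟩ ⟨p₂.concat h2, hq₂⟩
    have heqw : p₁.concat h1 = p₂.concat h2 := Subtype.ext_iff.mp heq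
    have hs := congrArg (fun w => w.reverse.support) heqw
    simp only [SimpleGraph.Walk.reverse_concat, SimpleGraph.Walk.support_cons] at hs
    have hs' : p₁.reverse.support = p₂.reverse.support := by
      injection hs
    have e₁ : p₁.reverse.support.head? = some u₁ := by
      rw [p₁.reverse.support_eq_cons]; rfl
    have e₂ : p₂.reverse.support.head? = some u₂ := by
      rw [p₂.reverse.support_eq_cons]; rfl
    rw [hs', e₂] at e₁
    exact (Option.some_injective _ e₁).symm
  -- parent existence
  have hE0 : ∀ v : V, v ≠ b → ∃ u, G.Adj u v ∧ G.dist b u + 1 = G.dist b v := by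
    intro v hv
    obtain ⟨p, hp, hl⟩ := hconn.exists_path_of_dist b v
    obtain ⟨u, h, q, hq⟩ := SimpleGraph.Walk.exists_eq_cons_of_ne hv p.reverse
    have hql : q.length + 1 = p.length := by
      have := congrArg SimpleGraph.Walk.length hq
      rw [SimpleGraph.Walk.length_reverse, SimpleGraph.Walk.length_cons] at this
      omega
    have hd : G.dist b u ≤ q.length := by
      have h2 := SimpleGraph.dist_le q
      rwa [SimpleGraph.dist_comm] at h2
    have htr : G.dist b v ≤ G.dist b u + G.dist u v := hconn.dist_triangle
    rw [hd1 u v h.symm] at htr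
    exact ⟨u, h.symm, by omega⟩
  -- the children sets
  set C : V → Set V := fun v => {w | G.Adj v w ∧ G.dist b w = G.dist b v + 1} with hCdef
  have hCb : C b = G.neighborSet b := by
    ext w
    constructor
    · exact fun hw => hw.1
    · intro hw
      refine ⟨hw, ?_⟩
      rw [SimpleGraph.dist_self, hd1 b w hw]
  have hCne : ∀ v : V, v ≠ b → ∃ u, C v = G.neighborSet v \ {u} := by
    intro v hv
    obtain ⟨u, hu, hud⟩ := hE0 v hv
    refine ⟨u, ?_⟩
    ext w
    constructor
    · rintro ⟨haw, hdw⟩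
      refine ⟨haw, ?_⟩
      simp only [Set.mem_singleton_iff]
      intro rfl'
      subst rfl'
      omega
    · rintro ⟨haw, hne⟩
      simp only [Set.mem_singleton_iff] at hne
      refine ⟨haw, ?_⟩
      rcases hB w v haw.symm with h | h
      · exact absurd (hC v w u haw.symm hu h hud) hne
      · omega
  have hCcnt : ∀ v : V, Nonempty (ℕ ≃ (C v : Set V)) := by
    intro v
    have hsub : C v ⊆ G.neighborSet v := fun w hw => hw.1
    have hcnt : (C v).Countable :=
      Set.Countable.mono hsub (Set.countable_coe_iff.mp (hdeg v).1)
    have hinf : (C v).Infinite := by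
      by_cases hv : v = b
      · subst hv
        rw [hCb]
        exact Set.infinite_coe_iff.mp (hdeg _).2
      · obtain ⟨u, hu⟩ := hCne v hv
        rw [hu]
        exact (Set.infinite_coe_iff.mp (hdeg v).2).diff (Set.finite_singleton u)
    haveI : Countable (C v : Set V) := Set.countable_coe_iff.mpr hcnt
    haveI : Infinite (C v : Set V) := Set.infinite_coe_iff.mpr hinf
    obtain ⟨d⟩ := nonempty_denumerable (C v : Set V)
    exact ⟨(d.eqv _).symm⟩
  -- choose enumerations of the children sets
  let e : ∀ v : V, ℕ ≃ (C v : Set V) := fun v => Classical.choice (hCcnt v)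
  let ch : V → ℕ → V := fun v n => ((e v) n : V)
  have hch_mem : ∀ v n, ch v n ∈ C v := fun v n => ((e v) n).2
  have hch_inj : ∀ v m n, ch v m = ch v n → m = n := fun v m n h =>
    (e v).injective (Subtype.ext h)
  have hch_surj : ∀ v w, w ∈ C v → ∃ n, ch v n = w := fun v w hw =>
    ⟨(e v).symm ⟨w, hw⟩, by simp [ch]⟩
  set g : List ℕ → V := buildVert ch b with hgdef
  have hg_nil : g [] = b := rfl
  have hg_cons : ∀ n l, g (n :: l) = ch (g l) n := fun n l => rfl
  have hg_adj : ∀ l n, G.Adj (g l) (g (n :: l)) := fun l n => (hch_mem (g l) n).1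
  have hg_dist : ∀ l, G.dist b (g l) = l.length := by
    intro l
    induction l with
    | nil => rw [hg_nil, List.length_nil]; exact SimpleGraph.dist_self
    | cons n t ih =>
      have := (hch_mem (g t) n).2
      rw [hg_cons]
      simp only [List.length_cons]
      omega
  have hg_inj : ∀ l₁ l₂, g l₁ = g l₂ → l₁ = l₂ := by
    intro l₁
    induction l₁ with
    | nil =>
      intro l₂ h
      cases l₂ with
      | nil => rfl
      | cons m s =>
        have h2 := hg_dist (m :: s)
        rw [← h, hg_nil, SimpleGraph.dist_self] at h2
        simp at h2
    | cons n t ih =>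
      intro l₂ h
      cases l₂ with
      | nil =>
        have h2 := hg_dist (n :: t)
        rw [h, hg_nil, SimpleGraph.dist_self] at h2
        simp at h2
      | cons m s =>
        have hadj1 : G.Adj (g t) (g (m :: s)) := h ▸ hg_adj t n
        have hadj2 : G.Adj (g s) (g (m :: s)) := hg_adj s m
        have hp₁ : G.dist b (g t) + 1 = G.dist b (g (m :: s)) := by
          have h2 := (hch_mem (g t) n).2
          rw [← hg_cons, h] at h2
          omega
        have hp₂ : G.dist b (g s) + 1 = G.dist b (g (m :: s)) := by
          have h2 := (hch_mem (g s) m).2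
          rw [← hg_cons] at h2
          omega
        have hts : g t = g s := hC (g (m :: s)) (g t) (g s) hadj1 hadj2 hp₁ hp₂
        have hts' : t = s := ih s hts
        subst hts'
        rw [hg_cons, hg_cons] at h
        rw [hch_inj (g t) n m h]
  have hg_surj : ∀ v : V, ∃ l, g l = v := by
    intro v
    obtain ⟨d, hd⟩ : ∃ d, G.dist b v = d := ⟨_, rfl⟩
    induction d using Nat.strong_induction_on generalizing v with
    | _ d ihd =>
      by_cases hv : v = b
      · exact ⟨[], hv.symm⟩
      · obtain ⟨u, hu, hud⟩ := hE0 v hv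
        have hdu : G.dist b u = d - 1 := by omega
        have hdpos : 0 < d := by
          have := hconn.pos_dist_of_ne (Ne.symm hv)
          omega
        obtain ⟨l, hl⟩ := ihd (d - 1) (by omega) u hdu
        have hvC : v ∈ C u := ⟨hu, by omega⟩
        obtain ⟨n, hn⟩ := hch_surj u v hvC
        exact ⟨n :: l, by rw [hg_cons, hl, hn]⟩
  have hg_adj_iff : ∀ x y, G.Adj (g x) (g y) ↔ T.Adj x y := by
    intro x y
    constructor
    · intro h
      rcases hB (g x) (g y) h with hd | hd
      · -- dist (g x) + 1 = dist (g y), so y = m :: x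
        cases y with
        | nil =>
          have h0 : G.dist b (g ([] : List ℕ)) = 0 := by
            rw [hg_nil]; exact SimpleGraph.dist_self
          omega
        | cons m s =>
          have hp : G.dist b (g s) + 1 = G.dist b (g (m :: s)) := by
            have h2 := (hch_mem (g s) m).2
            rw [← hg_cons] at h2
            omega
          have : g x = g s :=
            hC (g (m :: s)) (g x) (g s) h (hg_adj s m) hd hp
          have hxs : x = s := hg_inj x s this
          subst hxs
          exact Or.inr ⟨m, rfl⟩
      · cases x with
        | nil =>
          have h0 : G.dist b (g ([] : List ℕ)) = 0 := by
            rw [hg_nil]; exact SimpleGraph.dist_self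
          omega
        | cons n t =>
          have hp : G.dist b (g t) + 1 = G.dist b (g (n :: t)) := by
            have h2 := (hch_mem (g t) n).2
            rw [← hg_cons] at h2
            omega
          have : g y = g t :=
            hC (g (n :: t)) (g y) (g t) h.symm (hg_adj t n) hd hp
          have hyt : y = t := hg_inj y t this
          subst hyt
          exact Or.inl ⟨n, rfl⟩
    · rintro (⟨n, rfl⟩ | ⟨n, rfl⟩)
      · exact (hg_adj y n).symm
      · exact hg_adj x n
  -- the isomorphism T ≃g G
  let gEquiv : List ℕ ≃ V :=
    Equiv.ofBijective g ⟨fun x y h => hg_inj x y h, hg_surj⟩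
  let ψ : T ≃g G := ⟨gEquiv, fun {x y} => hg_adj_iff x y⟩
  have hψ : ∀ l, ψ l = g l := fun l => rfl
  -- locate a and a' as children of b
  have haC : a ∈ C b := ⟨ha, by rw [SimpleGraph.dist_self, hd1 b a ha]⟩
  have haC' : a' ∈ C b := ⟨ha', by rw [SimpleGraph.dist_self, hd1 b a' ha']⟩
  obtain ⟨m, hm⟩ := hch_surj b a haC
  obtain ⟨m', hm'⟩ := hch_surj b a' haC'
  have hga : g [m] = a := by rw [hg_cons, hg_nil, hm]
  have hga' : g [m'] = a' := by rw [hg_cons, hg_nil, hm']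
  -- assemble the automorphism
  let π : Equiv.Perm ℕ := Equiv.swap m m'
  let f : G ≃g G := (ψ.symm.trans (lastIso π)).trans ψ
  refine ⟨f, ?_, ?_⟩
  · show ψ ((lastIso π) (ψ.symm b)) = b
    have h0 : gEquiv.symm b = ([] : List ℕ) := gEquiv.symm_apply_eq.mpr hg_nil.symm
    show g (lastMap π (gEquiv.symm b)) = b
    rw [h0]
    exact hg_nil
  · show ψ ((lastIso π) (ψ.symm a)) = a'
    have h0 : gEquiv.symm a = [m] := gEquiv.symm_apply_eq.mpr hga.symm
    show g (lastMap π (gEquiv.symm a)) = a'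
    rw [h0]
    have h2 : lastMap π [m] = [m'] := by
      show [π m] = [m']
      rw [show π m = m' from Equiv.swap_apply_left m m']
    rw [h2]
    exact hga'
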